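/- arXiv:2201.13281 — 4 statements merged into one kernel-verified Lean document; each statement's English description precedes it below -/
import Mathlib

section
/- Let d ≥ 1, s ∈ (0,1), and O ⊂ ℝ^d be open. Suppose u ∈ H^s(ℝ^d) (i.e. u ∈ L²(ℝ^d) and |u|_{H^s} < ∞) satisfies (−Δ)^s u + u ≤ 0 weakly in O, i.e. ⟨u,h⟩_{H^s} ≤ −∫_{ℝ^d} u h for all h ∈ H^s_0(Ō) with h ≥ 0, and that u ≤ 0 almost everywhere on ℝ^d ∖ O. Then u ≤ 0 almost everywhere on ℝ^d. -/
open MeasureTheory Filter Topology Metric Set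
open scoped ENNReal NNReal RealInnerProductSpace Pointwise

noncomputable section

/-- Euclidean space `ℝ^d`. -/
abbrev Euc (d : ℕ) := EuclideanSpace ℝ (Fin d)

/-- The fractional `H^s` inner product
`⟨u,v⟩_{H^s} = ∫∫ (u x − u y)(v x − v y)/|x−y|^{d+2s} dx dy`. -/
def fracInner (d : ℕ) (s : ℝ) (u v : Euc d → ℝ) : ℝ :=
  ∫ p : Euc d × Euc d, (u p.1 - u p.2) * (v p.1 - v p.2) / dist p.1 p.2 ^ ((d : ℝ) + 2 * s)

/-- The squared Gagliardo seminorm `|u|²_{H^s}` as an extended nonnegative real. -/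
def fracSq (d : ℕ) (s : ℝ) (u : Euc d → ℝ) : ℝ≥0∞ :=
  ∫⁻ p : Euc d × Euc d, ENNReal.ofReal ((u p.1 - u p.2) ^ 2 / dist p.1 p.2 ^ ((d : ℝ) + 2 * s))

/-- `H^s_0(Ω̄)`: functions on `ℝ^d` vanishing outside `Ω` with finite Gagliardo seminorm. -/
def Hs0 (d : ℕ) (s : ℝ) (Ω : Set (Euc d)) : Set (Euc d → ℝ) :=
  {u | (∀ x, x ∉ Ω → u x = 0) ∧ fracSq d s u < ⊤}

/-- weak maximum principle for `(−Δ)^s + Id`. -/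
theorem fractional_weak_maximum_principle
    (d : ℕ) (hd : 1 ≤ d) (s : ℝ) (hs : s ∈ Set.Ioo (0 : ℝ) 1)
    (O : Set (Euc d)) (hO : IsOpen O)
    (u : Euc d → ℝ) (huL2 : MemLp u 2 volume) (huHs : fracSq d s u < ⊤)
    (hsub : ∀ h ∈ Hs0 d s O, (∀ x, 0 ≤ h x) →
      fracInner d s u h ≤ - ∫ x, u x * h x)
    (hout : ∀ᵐ x ∂(volume : Measure (Euc d)), x ∉ O → u x ≤ 0) :
    ∀ᵐ x ∂(volume : Measure (Euc d)), u x ≤ 0 := by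
  set q : ℝ := (d : ℝ) + 2 * s with hq
  set h : Euc d → ℝ := O.indicator (fun x => max (u x) 0) with hh
  -- a.e., h agrees with the positive part of u
  have hN : ∀ᵐ x ∂(volume : Measure (Euc d)), h x = max (u x) 0 := by
    filter_upwards [hout] with x hx
    by_cases hxO : x ∈ O
    · simp [hh, Set.indicator_of_mem hxO]
    · rw [hh, Set.indicator_of_notMem hxO, max_eq_right (hx hxO)]
  -- a.e. on the product, both coordinates agree
  have hNp : ∀ᵐ p : Euc d × Euc d,
      h p.1 = max (u p.1) 0 ∧ h p.2 = max (u p.2) 0 := by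
    rw [Measure.volume_eq_prod]
    exact (Measure.quasiMeasurePreserving_fst.ae hN).and
      (Measure.quasiMeasurePreserving_snd.ae hN)
  -- h ∈ Hs0
  have hmem : h ∈ Hs0 d s O := by
    constructor
    · intro x hx; exact Set.indicator_of_notMem hx _
    · refine lt_of_le_of_lt ?_ huHs
      refine lintegral_mono_ae ?_
      filter_upwards [hNp] with p ⟨h1, h2⟩
      apply ENNReal.ofReal_le_ofReal
      have hdn : (0:ℝ) ≤ dist p.1 p.2 ^ q := Real.rpow_nonneg dist_nonneg q
      rcases eq_or_lt_of_le hdn with hd0 | hd0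
      · rw [← hd0]; simp
      · rw [div_le_div_iff_of_pos_right hd0]
        have habs : |h p.1 - h p.2| ≤ |u p.1 - u p.2| := by
          rw [h1, h2]; exact abs_max_sub_max_le_abs _ _ _
        calc (h p.1 - h p.2) ^ 2 = |h p.1 - h p.2| ^ 2 := (sq_abs _).symm
          _ ≤ |u p.1 - u p.2| ^ 2 := by
              exact pow_le_pow_left₀ (abs_nonneg _) habs 2
          _ = (u p.1 - u p.2) ^ 2 := sq_abs _
  have hpos : ∀ x, 0 ≤ h x := by
    intro x; by_cases hxO : x ∈ O <;> simp [hh, hxO, le_max_right]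
  -- fracInner u h ≥ 0
  have hFI : 0 ≤ fracInner d s u h := by
    refine integral_nonneg_of_ae ?_
    filter_upwards [hNp] with p ⟨h1, h2⟩
    apply div_nonneg _ (Real.rpow_nonneg (dist_nonneg (x := p.1) (y := p.2)) q)
    rw [h1, h2]
    rcases le_total (u p.1) (u p.2) with hle | hle
    · have : max (u p.1) 0 ≤ max (u p.2) 0 := max_le_max hle le_rfl
      nlinarith
    · have : max (u p.2) 0 ≤ max (u p.1) 0 := max_le_max hle le_rfl
      nlinarith
  have hsub' := hsub h hmem hpos
  have hIuh : ∫ x, u x * h x ≤ 0 := by linarith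
  -- u * h = h ^ 2 pointwise
  have huh : ∀ x, u x * h x = h x ^ 2 := by
    intro x
    by_cases hxO : x ∈ O
    · rw [hh, Set.indicator_of_mem hxO]
      rcases le_total (u x) 0 with hx | hx
      · rw [max_eq_right hx]; ring
      · rw [max_eq_left hx]; ring
    · rw [hh, Set.indicator_of_notMem hxO]; ring
  -- h² is integrable
  have hmeas : AEStronglyMeasurable h volume := by
    have : AEStronglyMeasurable (fun x => max (u x) 0) volume :=
      huL2.aestronglyMeasurable.sup aestronglyMeasurable_const
    exact AEStronglyMeasurable.indicator this hO.measurableSet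
  have hintsq : Integrable (fun x => h x ^ 2) volume := by
    refine Integrable.mono' huL2.integrable_sq (hmeas.pow 2) ?_
    apply Eventually.of_forall
    intro x
    rw [Real.norm_eq_abs, abs_of_nonneg (sq_nonneg _)]
    by_cases hxO : x ∈ O
    · rw [hh, Set.indicator_of_mem hxO]
      rcases le_total (u x) 0 with hx | hx
      · rw [max_eq_right hx]; simpa using sq_nonneg (u x)
      · rw [max_eq_left hx]
    · rw [hh, Set.indicator_of_notMem hxO]; simpa using sq_nonneg (u x)
  -- conclude h = 0 a.e.
  have hInt0 : ∫ x, h x ^ 2 ∂(volume : Measure (Euc d)) = 0 := by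
    have h1 : ∫ x, h x ^ 2 ∂(volume : Measure (Euc d)) ≤ 0 := by
      rw [← integral_congr_ae (Eventually.of_forall huh)] at *
      exact hIuh
    have h2 : 0 ≤ ∫ x, h x ^ 2 ∂(volume : Measure (Euc d)) :=
      integral_nonneg fun x => sq_nonneg _
    linarith
  have hz : ∀ᵐ x ∂(volume : Measure (Euc d)), h x ^ 2 = 0 := by
    have := (integral_eq_zero_iff_of_nonneg_ae
      (Eventually.of_forall fun x => sq_nonneg (h x)) hintsq).mp hInt0
    filter_upwards [this] with x hx
    simpa using hx
  filter_upwards [hz, hout] with x hx hx2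
  by_cases hxO : x ∈ O
  · have : h x = 0 := by
      have := sq_eq_zero_iff.mp hx; exact this
    rw [hh, Set.indicator_of_mem hxO] at this
    exact max_eq_right_iff.mp this
  · exact hx2 hxO
end
end

section
/- Let d ≥ 1, s ∈ (0,1), O ⊂ ℝ^d open, and f, g ∈ L²(ℝ^d) with f ≤ g almost everywhere on O. Let u, v ∈ H^s(ℝ^d) be weak solutions of (−Δ)^s u + u = f in O and (−Δ)^s v + v = g in O respectively, i.e. ⟨u,h⟩_{H^s} = ∫_{ℝ^d}(f−u)h and ⟨v,h⟩_{H^s} = ∫_{ℝ^d}(g−v)h for all h ∈ H^s_0(Ō). If u ≤ v almost everywhere on ℝ^d ∖ O, then u ≤ v almost everywhere on O. -/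
open MeasureTheory Filter Topology Metric Set
open scoped ENNReal NNReal RealInnerProductSpace Pointwise

noncomputable section

/-! ### Auxiliary lemmas -/

lemma Frac.ae_fst {d : ℕ} {P : Euc d → Prop}
    (h : ∀ᵐ x ∂(volume : Measure (Euc d)), P x) :
    ∀ᵐ p ∂(volume : Measure (Euc d × Euc d)), P p.1 := by
  rw [show (volume : Measure (Euc d × Euc d)) =
      (volume : Measure (Euc d)).prod volume from rfl]
  exact (Measure.quasiMeasurePreserving_fst (μ := (volume : Measure (Euc d))) (ν := volume)).ae h

lemma Frac.ae_snd {d : ℕ} {P : Euc d → Prop}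
    (h : ∀ᵐ x ∂(volume : Measure (Euc d)), P x) :
    ∀ᵐ p ∂(volume : Measure (Euc d × Euc d)), P p.2 := by
  rw [show (volume : Measure (Euc d × Euc d)) =
      (volume : Measure (Euc d)).prod volume from rfl]
  exact (Measure.quasiMeasurePreserving_snd (μ := (volume : Measure (Euc d))) (ν := volume)).ae h

lemma Frac.aesm_fst {d : ℕ} {a : Euc d → ℝ}
    (ha : AEStronglyMeasurable a (volume : Measure (Euc d))) :
    AEStronglyMeasurable (fun p : Euc d × Euc d => a p.1) volume := by
  have : AEStronglyMeasurable (a ∘ Prod.fst) ((volume : Measure (Euc d)).prod volume) :=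
    ha.comp_quasiMeasurePreserving (Measure.quasiMeasurePreserving_fst (μ := (volume : Measure (Euc d))) (ν := (volume : Measure (Euc d))))
  exact this

lemma Frac.aesm_snd {d : ℕ} {a : Euc d → ℝ}
    (ha : AEStronglyMeasurable a (volume : Measure (Euc d))) :
    AEStronglyMeasurable (fun p : Euc d × Euc d => a p.2) volume := by
  have : AEStronglyMeasurable (a ∘ Prod.snd) ((volume : Measure (Euc d)).prod volume) :=
    ha.comp_quasiMeasurePreserving (Measure.quasiMeasurePreserving_snd (μ := (volume : Measure (Euc d))) (ν := (volume : Measure (Euc d))))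
  exact this

lemma Frac.measurable_K (d : ℕ) (s : ℝ) :
    Measurable (fun p : Euc d × Euc d => dist p.1 p.2 ^ ((d : ℝ) + 2 * s)) :=
  (measurable_fst.dist measurable_snd).pow_const _

lemma Frac.abs_mul_le_half (x y : ℝ) : |x * y| ≤ (x ^ 2 + y ^ 2) / 2 := by
  rw [abs_mul]
  nlinarith [sq_nonneg (|x| - |y|), sq_abs x, sq_abs y, abs_nonneg x, abs_nonneg y]

lemma Frac.K_nonneg {d : ℕ} {s : ℝ} (p : Euc d × Euc d) :
    0 ≤ dist p.1 p.2 ^ ((d : ℝ) + 2 * s) :=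
  Real.rpow_nonneg dist_nonneg _

/-- Integrability of the squared difference quotient. -/
lemma Frac.sq_integrable {d : ℕ} {s : ℝ} {a : Euc d → ℝ}
    (ha : AEStronglyMeasurable a (volume : Measure (Euc d)))
    (hfin : fracSq d s a < ⊤) :
    Integrable (fun p : Euc d × Euc d =>
      (a p.1 - a p.2) ^ 2 / dist p.1 p.2 ^ ((d : ℝ) + 2 * s)) volume := by
  refine ⟨((((Frac.aesm_fst ha).sub (Frac.aesm_snd ha)).pow 2).aemeasurable.div
      (Frac.measurable_K d s).aemeasurable).aestronglyMeasurable, ?_⟩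
  rw [hasFiniteIntegral_iff_ofReal]
  · exact hfin
  · exact Eventually.of_forall fun p => div_nonneg (sq_nonneg _) (Frac.K_nonneg p)

/-- Integrability of the mixed difference quotient. -/
lemma Frac.mixed_integrable {d : ℕ} {s : ℝ} {a b : Euc d → ℝ}
    (ha : AEStronglyMeasurable a (volume : Measure (Euc d)))
    (hb : AEStronglyMeasurable b (volume : Measure (Euc d)))
    (hfa : fracSq d s a < ⊤) (hfb : fracSq d s b < ⊤) :
    Integrable (fun p : Euc d × Euc d =>
      (a p.1 - a p.2) * (b p.1 - b p.2) / dist p.1 p.2 ^ ((d : ℝ) + 2 * s)) volume := by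
  have hint : Integrable (fun p : Euc d × Euc d =>
      ((a p.1 - a p.2) ^ 2 / dist p.1 p.2 ^ ((d : ℝ) + 2 * s) +
       (b p.1 - b p.2) ^ 2 / dist p.1 p.2 ^ ((d : ℝ) + 2 * s)) / 2) volume :=
    ((Frac.sq_integrable ha hfa).add (Frac.sq_integrable hb hfb)).div_const 2
  refine hint.mono' ?_ (Eventually.of_forall fun p => ?_)
  · exact ((((Frac.aesm_fst ha).sub (Frac.aesm_snd ha)).mul
      ((Frac.aesm_fst hb).sub (Frac.aesm_snd hb))).aemeasurable.div
      (Frac.measurable_K d s).aemeasurable).aestronglyMeasurable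
  · set K := dist p.1 p.2 ^ ((d : ℝ) + 2 * s) with hK
    have hK0 : 0 ≤ K := Frac.K_nonneg p
    set x := a p.1 - a p.2
    set y := b p.1 - b p.2
    have h1 : |x * y| ≤ (x ^ 2 + y ^ 2) / 2 := Frac.abs_mul_le_half x y
    calc ‖x * y / K‖ = |x * y| / K := by
          rw [Real.norm_eq_abs, abs_div, abs_of_nonneg hK0]
      _ ≤ ((x ^ 2 + y ^ 2) / 2) / K := by gcongr
      _ = (x ^ 2 / K + y ^ 2 / K) / 2 := by ring

/-- Integrability of the product of two `L²` functions. -/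
lemma Frac.L2_mul_integrable {d : ℕ} {a b : Euc d → ℝ}
    (ha : MemLp a 2 (volume : Measure (Euc d))) (hb : MemLp b 2 volume) :
    Integrable (fun x => a x * b x) volume := by
  have h : (1 : ℝ≥0∞) / 1 = 1 / 2 + 1 / 2 := by
    rw [ENNReal.div_add_div_same, one_div_one, one_add_one_eq_two]
    exact (ENNReal.div_self (by norm_num) ENNReal.ofNat_ne_top).symm
  haveI : ENNReal.HolderTriple 2 2 1 := ⟨by rw [ENNReal.inv_two_add_inv_two, inv_one]⟩
  have := hb.smul (r := 1) ha
  rw [memLp_one_iff_integrable] at this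
  exact this

/-- comparison principle for `(−Δ)^s + Id`. -/
theorem fractional_comparison_principle
    (d : ℕ) (hd : 1 ≤ d) (s : ℝ) (hs : s ∈ Set.Ioo (0 : ℝ) 1)
    (O : Set (Euc d)) (hO : IsOpen O)
    (f g : Euc d → ℝ) (hf : MemLp f 2 volume) (hg : MemLp g 2 volume)
    (hfg : ∀ᵐ x ∂(volume : Measure (Euc d)), x ∈ O → f x ≤ g x)
    (u v : Euc d → ℝ)
    (huL2 : MemLp u 2 volume) (huHs : fracSq d s u < ⊤)
    (hvL2 : MemLp v 2 volume) (hvHs : fracSq d s v < ⊤)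
    (hu : ∀ h ∈ Hs0 d s O, fracInner d s u h = ∫ x, (f x - u x) * h x)
    (hv : ∀ h ∈ Hs0 d s O, fracInner d s v h = ∫ x, (g x - v x) * h x)
    (hout : ∀ᵐ x ∂(volume : Measure (Euc d)), x ∉ O → u x ≤ v x) :
    ∀ᵐ x ∂(volume : Measure (Euc d)), x ∈ O → u x ≤ v x := by
  classical
  set w : Euc d → ℝ := fun x => u x - v x with hw_def
  set h : Euc d → ℝ := fun x => if x ∈ O then max (w x) 0 else 0 with hh_def
  set g0 : Euc d → ℝ := fun x => max (w x) 0 with hg0_def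
  -- a.e. equality of h and g0
  have hhg0 : h =ᵐ[volume] g0 := by
    filter_upwards [hout] with x hx
    by_cases hxO : x ∈ O
    · simp [hh_def, hg0_def, hxO]
    · have : w x ≤ 0 := sub_nonpos.mpr (hx hxO)
      simp [hh_def, hg0_def, hxO, max_eq_right this]
  -- measurability
  have hwsm : AEStronglyMeasurable w volume := huL2.1.sub hvL2.1
  have hg0sm : AEStronglyMeasurable g0 volume := (hwsm.aemeasurable.max aemeasurable_const).aestronglyMeasurable
  have hhsm : AEStronglyMeasurable h volume := hg0sm.congr hhg0.symm
  -- finiteness of fracSq w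
  have hwHs : fracSq d s w < ⊤ := by
    have hbd : fracSq d s w ≤ 2 * fracSq d s u + 2 * fracSq d s v := by
      unfold fracSq
      have key : ∀ p : Euc d × Euc d,
          ENNReal.ofReal ((w p.1 - w p.2) ^ 2 / dist p.1 p.2 ^ ((d : ℝ) + 2 * s)) ≤
          2 * ENNReal.ofReal ((u p.1 - u p.2) ^ 2 / dist p.1 p.2 ^ ((d : ℝ) + 2 * s)) +
          2 * ENNReal.ofReal ((v p.1 - v p.2) ^ 2 / dist p.1 p.2 ^ ((d : ℝ) + 2 * s)) := by
        intro p
        set K := dist p.1 p.2 ^ ((d : ℝ) + 2 * s) with hK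
        have hK0 : 0 ≤ K := Frac.K_nonneg p
        have h1 : (w p.1 - w p.2) ^ 2 ≤
            2 * (u p.1 - u p.2) ^ 2 + 2 * (v p.1 - v p.2) ^ 2 := by
          simp only [hw_def]; nlinarith [sq_nonneg ((u p.1 - u p.2) + (v p.1 - v p.2))]
        calc ENNReal.ofReal ((w p.1 - w p.2) ^ 2 / K)
            ≤ ENNReal.ofReal ((2 * (u p.1 - u p.2) ^ 2 + 2 * (v p.1 - v p.2) ^ 2) / K) :=
              ENNReal.ofReal_le_ofReal (by gcongr)
          _ = ENNReal.ofReal (2 * ((u p.1 - u p.2) ^ 2 / K) + 2 * ((v p.1 - v p.2) ^ 2 / K)) := by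
              ring_nf
          _ ≤ ENNReal.ofReal (2 * ((u p.1 - u p.2) ^ 2 / K)) +
              ENNReal.ofReal (2 * ((v p.1 - v p.2) ^ 2 / K)) := ENNReal.ofReal_add_le
          _ = 2 * ENNReal.ofReal ((u p.1 - u p.2) ^ 2 / K) +
              2 * ENNReal.ofReal ((v p.1 - v p.2) ^ 2 / K) := by
              rw [ENNReal.ofReal_mul (by norm_num : (0:ℝ) ≤ 2),
                ENNReal.ofReal_mul (by norm_num : (0:ℝ) ≤ 2)]
              norm_num
      calc ∫⁻ p : Euc d × Euc d,
            ENNReal.ofReal ((w p.1 - w p.2) ^ 2 / dist p.1 p.2 ^ ((d : ℝ) + 2 * s))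
          ≤ ∫⁻ p : Euc d × Euc d,
            (2 * ENNReal.ofReal ((u p.1 - u p.2) ^ 2 / dist p.1 p.2 ^ ((d : ℝ) + 2 * s)) +
             2 * ENNReal.ofReal ((v p.1 - v p.2) ^ 2 / dist p.1 p.2 ^ ((d : ℝ) + 2 * s))) :=
            lintegral_mono key
        _ ≤ 2 * fracSq d s u + 2 * fracSq d s v := by
            have hmu : AEMeasurable (fun p : Euc d × Euc d =>
                2 * ENNReal.ofReal ((u p.1 - u p.2) ^ 2 / dist p.1 p.2 ^ ((d : ℝ) + 2 * s)))
                volume := by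
              refine AEMeasurable.const_mul ?_ 2
              exact (ENNReal.measurable_ofReal.comp_aemeasurable
                ((((Frac.aesm_fst huL2.1).sub (Frac.aesm_snd huL2.1)).pow 2).aemeasurable.div
                  (Frac.measurable_K d s).aemeasurable))
            rw [lintegral_add_left' hmu, lintegral_const_mul' 2 _ (by norm_num),
              lintegral_const_mul' 2 _ (by norm_num)]
            unfold fracSq
            exact le_rfl
    have : 2 * fracSq d s u + 2 * fracSq d s v < ⊤ := by
      refine ENNReal.add_lt_top.mpr ⟨?_, ?_⟩ <;>
        exact ENNReal.mul_lt_top (by norm_num) ‹_›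
    exact lt_of_le_of_lt hbd this
  -- fracSq h = fracSq g0 ≤ fracSq w < ⊤
  have hprod_eq : ∀ᵐ p ∂(volume : Measure (Euc d × Euc d)), h p.1 = g0 p.1 ∧ h p.2 = g0 p.2 :=
    (Frac.ae_fst hhg0).and (Frac.ae_snd hhg0)
  have hhHs : fracSq d s h < ⊤ := by
    have heq : fracSq d s h = fracSq d s g0 := by
      refine lintegral_congr_ae ?_
      filter_upwards [hprod_eq] with p hp
      rw [hp.1, hp.2]
    have hle : fracSq d s g0 ≤ fracSq d s w := by
      refine lintegral_mono fun p => ?_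
      refine ENNReal.ofReal_le_ofReal ?_
      have hKn := Frac.K_nonneg (s := s) p
      gcongr (?_ / _)
      have habs : |g0 p.1 - g0 p.2| ≤ |w p.1 - w p.2| := abs_max_sub_max_le_abs _ _ _
      calc (g0 p.1 - g0 p.2) ^ 2 = |g0 p.1 - g0 p.2| ^ 2 := (sq_abs _).symm
        _ ≤ |w p.1 - w p.2| ^ 2 := by
            exact pow_le_pow_left₀ (abs_nonneg _) habs 2
        _ = (w p.1 - w p.2) ^ 2 := sq_abs _
    exact heq ▸ lt_of_le_of_lt hle hwHs
  have hmem : h ∈ Hs0 d s O := ⟨fun x hx => if_neg hx, hhHs⟩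
  -- h ∈ L²
  have hhL2 : MemLp h 2 volume := by
    refine (huL2.sub hvL2).mono hhsm ?_
    filter_upwards [hhg0] with x hx
    rw [hx]
    simp only [hg0_def, Real.norm_eq_abs, Pi.sub_apply]
    rw [abs_of_nonneg (le_max_right _ _)]
    exact max_le (le_abs_self _) (abs_nonneg _)
  -- integrabilities
  have hIu : Integrable (fun p : Euc d × Euc d =>
      (u p.1 - u p.2) * (h p.1 - h p.2) / dist p.1 p.2 ^ ((d : ℝ) + 2 * s)) volume :=
    Frac.mixed_integrable huL2.1 hhsm huHs hhHs
  have hIv : Integrable (fun p : Euc d × Euc d =>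
      (v p.1 - v p.2) * (h p.1 - h p.2) / dist p.1 p.2 ^ ((d : ℝ) + 2 * s)) volume :=
    Frac.mixed_integrable hvL2.1 hhsm hvHs hhHs
  -- difference of fracInner
  have hdiff : fracInner d s u h - fracInner d s v h =
      ∫ p : Euc d × Euc d,
        (w p.1 - w p.2) * (h p.1 - h p.2) / dist p.1 p.2 ^ ((d : ℝ) + 2 * s) := by
    rw [fracInner, fracInner, ← integral_sub hIu hIv]
    refine integral_congr_ae (Eventually.of_forall fun p => ?_)
    simp only [hw_def]
    rw [div_sub_div_same]
    ring_nf
  -- positivity of the fracInner of w against h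
  have hpos : 0 ≤ ∫ p : Euc d × Euc d,
      (w p.1 - w p.2) * (h p.1 - h p.2) / dist p.1 p.2 ^ ((d : ℝ) + 2 * s) := by
    refine integral_nonneg_of_ae ?_
    filter_upwards [hprod_eq] with p hp
    rw [hp.1, hp.2]
    refine div_nonneg ?_ (Frac.K_nonneg p)
    rcases le_total (w p.1) (w p.2) with hle | hle
    · have hg : g0 p.1 ≤ g0 p.2 := max_le_max hle le_rfl
      nlinarith [hg, hle]
    · have hg : g0 p.2 ≤ g0 p.1 := max_le_max hle le_rfl
      nlinarith [hg, hle]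
  -- integrabilities on ℝ^d
  have hIfu : Integrable (fun x => (f x - u x) * h x) volume :=
    Frac.L2_mul_integrable (hf.sub huL2) hhL2
  have hIgv : Integrable (fun x => (g x - v x) * h x) volume :=
    Frac.L2_mul_integrable (hg.sub hvL2) hhL2
  have hIfg : Integrable (fun x => (f x - g x) * h x) volume :=
    Frac.L2_mul_integrable (hf.sub hg) hhL2
  have hIwh : Integrable (fun x => w x * h x) volume :=
    Frac.L2_mul_integrable (huL2.sub hvL2) hhL2
  -- the right-hand side identity
  have hrhs : fracInner d s u h - fracInner d s v h =
      (∫ x, (f x - g x) * h x) - ∫ x, w x * h x := by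
    rw [hu h hmem, hv h hmem, ← integral_sub hIfu hIgv, ← integral_sub hIfg hIwh]
    refine integral_congr_ae (Eventually.of_forall fun x => ?_)
    simp only [hw_def]; ring
  -- ∫ (f-g) h ≤ 0
  have hfg0 : (∫ x, (f x - g x) * h x) ≤ 0 := by
    refine integral_nonpos_of_ae ?_
    filter_upwards [hfg] with x hx
    by_cases hxO : x ∈ O
    · have h1 : f x - g x ≤ 0 := sub_nonpos.mpr (hx hxO)
      have h2 : 0 ≤ h x := by simp only [hh_def, if_pos hxO]; exact le_max_right _ _
      exact mul_nonpos_of_nonpos_of_nonneg h1 h2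
    · simp [hh_def, if_neg hxO]
  -- w * h = h ^ 2 pointwise
  have hwh_sq : ∀ x, w x * h x = h x ^ 2 := by
    intro x
    by_cases hxO : x ∈ O
    · simp only [hh_def, if_pos hxO]
      rcases le_total (w x) 0 with hle | hle
      · rw [max_eq_right hle]; ring
      · rw [max_eq_left hle]; ring
    · simp [hh_def, if_neg hxO]
  -- conclude ∫ h² ≤ 0
  have hsq_int : Integrable (fun x => h x ^ 2) volume := by
    have := Frac.L2_mul_integrable hhL2 hhL2
    simpa [sq] using this
  have hsq_le : (∫ x, h x ^ 2) ≤ 0 := by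
    have h1 : (∫ x, w x * h x) = ∫ x, h x ^ 2 := by
      exact integral_congr_ae (Eventually.of_forall hwh_sq)
    have key : 0 ≤ (∫ x, (f x - g x) * h x) - ∫ x, w x * h x := by
      calc (0:ℝ) ≤ _ := hpos
        _ = fracInner d s u h - fracInner d s v h := hdiff.symm
        _ = _ := hrhs
    linarith [hfg0, h1, key]
  have hsq_zero : (∫ x, h x ^ 2) = 0 :=
    le_antisymm hsq_le (integral_nonneg fun x => sq_nonneg _)
  have hae : (fun x => h x ^ 2) =ᵐ[volume] 0 :=
    (integral_eq_zero_iff_of_nonneg (fun x => sq_nonneg _) hsq_int).mp hsq_zero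
  filter_upwards [hae] with x hx hxO
  have : h x = 0 := by
    have := hx
    simp only [Pi.zero_apply] at this
    exact pow_eq_zero_iff (n := 2) (by norm_num) |>.mp this
  simp only [hh_def, if_pos hxO] at this
  have hw0 : w x ≤ 0 := by
    by_contra hcon
    push_neg at hcon
    rw [max_eq_left hcon.le] at this
    exact absurd this (ne_of_gt hcon)
  simpa [hw_def, sub_nonpos] using hw0
end
end

section
/- Let d ≥ 1, s ∈ (0,1), Ω ⊂ ℝ^d open and bounded, f ∈ H^s_0(Ω̄) ∩ L²(Ω), and C > 0. Then there exists a constant K = K(f, C, |Ω|) such that for every α ∈ (0,1] and every n ∈ L²(Ω) with ‖n‖_{L²} ≤ C α, the unique minimizer u_{α,n} of u ↦ ∫_Ω (u − f − n)² + α |u|²_{H^s} over H^s_0(Ω̄) ∩ L²(Ω) satisfies ‖u_{α,n} − f‖_{L²(Ω)} ≤ K α^{1/2}. -/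
open MeasureTheory Filter Topology Metric Set
open scoped ENNReal NNReal RealInnerProductSpace Pointwise

noncomputable section

/-- `H^s_0(Ω̄) ∩ L²(Ω)` (functions vanishing outside `Ω`). -/
def admSet2 (d : ℕ) (s : ℝ) (Ω : Set (Euc d)) : Set (Euc d → ℝ) :=
  {w | w ∈ Hs0 d s Ω ∧ MemLp w 2 volume}

lemma l2_toReal_eq {d : ℕ} {g : Euc d → ℝ} (hg : MemLp g 2 volume) :
    (eLpNorm g 2 volume).toReal = Real.sqrt (∫ x, (g x) ^ 2) := by
  rw [hg.eLpNorm_eq_integral_rpow_norm two_ne_zero ENNReal.ofNat_ne_top,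
    ENNReal.toReal_ofReal (by positivity)]
  have h2 : (2 : ℝ≥0∞).toReal = 2 := by simp
  rw [h2]
  have : ∀ x, ‖g x‖ ^ (2 : ℝ) = (g x) ^ 2 := fun x => by
    rw [show (2:ℝ) = ((2:ℕ):ℝ) by norm_num, Real.rpow_natCast, Real.norm_eq_abs, sq_abs]
  simp_rw [this]
  rw [Real.sqrt_eq_rpow]
  norm_num

/-- `O(√α)` convergence rate in `L²` for fractional denoising. -/
theorem denoising_L2_rate
    (d : ℕ) (hd : 1 ≤ d) (s : ℝ) (hs : s ∈ Set.Ioo (0 : ℝ) 1)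
    (Ω : Set (Euc d)) (hΩo : IsOpen Ω) (hΩb : Bornology.IsBounded Ω)
    (f : Euc d → ℝ) (hf : f ∈ admSet2 d s Ω)
    (C : ℝ) (hC : 0 < C) :
    ∃ K : ℝ, ∀ α ∈ Set.Ioc (0 : ℝ) 1, ∀ n : Euc d → ℝ,
      (∀ x, x ∉ Ω → n x = 0) → MemLp n 2 volume →
      (eLpNorm n 2 volume).toReal ≤ C * α →
      ∀ u ∈ admSet2 d s Ω,
        IsMinOn (fun w => (∫ x in Ω, (w x - f x - n x) ^ 2) + α * (fracSq d s w).toReal)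
          (admSet2 d s Ω) u →
        (eLpNorm (u - f) 2 volume).toReal ≤ K * α ^ (1/2 : ℝ) := by
  set B := (fracSq d s f).toReal with hBdef
  have hB0 : 0 ≤ B := ENNReal.toReal_nonneg
  refine ⟨Real.sqrt (C ^ 2 + B) + C, ?_⟩
  rintro α ⟨hα0, hα1⟩ n hn0 hn2 hnC u hu hmin
  have hsqrt_α : 0 ≤ Real.sqrt α := Real.sqrt_nonneg α
  -- minimality at f
  have hEf := hmin hf
  simp only [Set.mem_setOf_eq] at hEf
  -- g := u - f - n
  have hg2 : MemLp (u - f - n) 2 volume := (hu.2.sub hf.2).sub hn2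
  -- the fidelity term at f equals ∫ n²
  have hInt_n : (∫ x in Ω, (f x - f x - n x) ^ 2) = ∫ x, (n x) ^ 2 := by
    have : ∀ x, (f x - f x - n x) ^ 2 = (n x) ^ 2 := fun x => by ring
    simp_rw [this]
    exact setIntegral_eq_integral_of_forall_compl_eq_zero fun x hx => by
      rw [hn0 x hx]; ring
  have hn_sq : ∫ x, (n x) ^ 2 ≤ (C * α) ^ 2 := by
    have h1 : Real.sqrt (∫ x, (n x) ^ 2) ≤ C * α := by
      rw [← l2_toReal_eq hn2]; exact hnC
    have h2 : 0 ≤ ∫ x, (n x) ^ 2 :=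
      integral_nonneg fun x => sq_nonneg _
    calc ∫ x, (n x) ^ 2 = Real.sqrt (∫ x, (n x) ^ 2) ^ 2 := (Real.sq_sqrt h2).symm
      _ ≤ (C * α) ^ 2 := by
          apply pow_le_pow_left₀ (Real.sqrt_nonneg _) h1
  -- fidelity term at u
  have hInt_u : (∫ x in Ω, (u x - f x - n x) ^ 2) = ∫ x, ((u - f - n) x) ^ 2 := by
    have := setIntegral_eq_integral_of_forall_compl_eq_zero
      (s := Ω) (f := fun x => ((u - f - n) x) ^ 2) (μ := volume)
      (fun x hx => by
        simp [Pi.sub_apply, hu.1.1 x hx, hf.1.1 x hx, hn0 x hx])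
    simpa [Pi.sub_apply] using this
  have hfrac_u : 0 ≤ α * (fracSq d s u).toReal :=
    mul_nonneg hα0.le ENNReal.toReal_nonneg
  -- key energy bound
  have hKey : ∫ x, ((u - f - n) x) ^ 2 ≤ (C * α) ^ 2 + α * B := by
    have : (∫ x in Ω, (u x - f x - n x) ^ 2) + α * (fracSq d s u).toReal ≤
        (∫ x in Ω, (f x - f x - n x) ^ 2) + α * B := hEf
    rw [hInt_n, hInt_u] at this
    nlinarith [hn_sq]
  have hα2 : α ^ 2 ≤ α := by nlinarith
  have hKey2 : ∫ x, ((u - f - n) x) ^ 2 ≤ α * (C ^ 2 + B) := by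
    nlinarith [sq_nonneg C]
  -- L² bound for u - f - n
  have hg_norm : (eLpNorm (u - f - n) 2 volume).toReal ≤
      Real.sqrt α * Real.sqrt (C ^ 2 + B) := by
    rw [l2_toReal_eq hg2, ← Real.sqrt_mul hα0.le]
    exact Real.sqrt_le_sqrt hKey2
  -- triangle inequality
  have htri : (eLpNorm (u - f) 2 volume).toReal ≤
      (eLpNorm (u - f - n) 2 volume).toReal + (eLpNorm n 2 volume).toReal := by
    have heq : u - f = (u - f - n) + n := by ext x; simp
    have h := eLpNorm_add_le hg2.aestronglyMeasurable hn2.aestronglyMeasurable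
      (le_refl (1:ℝ≥0∞) |>.trans (by norm_num : (1:ℝ≥0∞) ≤ 2))
    calc (eLpNorm (u - f) 2 volume).toReal
        = (eLpNorm ((u - f - n) + n) 2 volume).toReal := by rw [← heq]
      _ ≤ (eLpNorm (u - f - n) 2 volume + eLpNorm n 2 volume).toReal := by
          apply ENNReal.toReal_mono (ENNReal.add_ne_top.2 ⟨hg2.2.ne, hn2.2.ne⟩) h
      _ = _ := ENNReal.toReal_add hg2.2.ne hn2.2.ne
  -- ‖n‖ ≤ Cα ≤ C√α
  have hα_sqrt : α ≤ Real.sqrt α :=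
    calc α = Real.sqrt (α ^ 2) := (Real.sqrt_sq hα0.le).symm
      _ ≤ Real.sqrt α := Real.sqrt_le_sqrt hα2
  have hn_bound : (eLpNorm n 2 volume).toReal ≤ C * Real.sqrt α :=
    hnC.trans (by nlinarith)
  rw [show α ^ (1/2 : ℝ) = Real.sqrt α from (Real.sqrt_eq_rpow α).symm]
  calc (eLpNorm (u - f) 2 volume).toReal
      ≤ Real.sqrt α * Real.sqrt (C ^ 2 + B) + C * Real.sqrt α := by
        have := htri.trans (add_le_add hg_norm hn_bound); linarith
    _ = (Real.sqrt (C ^ 2 + B) + C) * Real.sqrt α := by ring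
end
end

section
/- Let d ≥ 1, s ∈ (0,1), Ω ⊂ ℝ^d open and bounded, α > 0, and f ∈ L^∞(Ω) with essinf_Ω f ≤ 0 ≤ esssup_Ω f. Then the unique minimizer u of u ↦ ∫_Ω (u − f)² + α |u|²_{H^s} over H^s_0(Ω̄) ∩ L²(Ω) satisfies essinf_Ω f ≤ u(x) ≤ esssup_Ω f for almost every x ∈ Ω. -/
open MeasureTheory Filter Topology Metric Set
open scoped ENNReal NNReal RealInnerProductSpace Pointwise

noncomputable section

/-- clamping to `[m,M]` is 1-Lipschitz. -/
lemma clamp_lip (m M a b : ℝ) : |max m (min M a) - max m (min M b)| ≤ |a - b| := by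
  calc |max m (min M a) - max m (min M b)|
      = |max (min M a) m - max (min M b) m| := by rw [max_comm m, max_comm m]
    _ ≤ |min M a - min M b| := abs_max_sub_max_le_abs _ _ _
    _ = |min a M - min b M| := by rw [min_comm M, min_comm M]
    _ ≤ |a - b| := by
        refine (abs_min_sub_min_le_max a M b M).trans ?_
        simp [abs_nonneg]

/-- clamping to `[m,M]` moves a point closer to any `c ∈ [m,M]`. -/
lemma clamp_sq_le (m M a c : ℝ) (h1 : m ≤ c) (h2 : c ≤ M) :
    (max m (min M a) - c) ^ 2 ≤ (a - c) ^ 2 := by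
  rcases le_total a m with h | h
  · have hM : a ≤ M := h.trans (h1.trans h2)
    rw [min_eq_right hM, max_eq_left h]
    nlinarith
  · rcases le_total a M with h' | h'
    · rw [min_eq_right h', max_eq_right h]
    · rw [min_eq_left h', max_eq_right (h1.trans h2)]
      nlinarith

set_option maxHeartbeats 1000000 in
/-- truncation: the denoised function stays between the essential
bounds of the data. -/
theorem truncation_lemma
    (d : ℕ) (hd : 1 ≤ d) (s : ℝ) (hs : s ∈ Set.Ioo (0 : ℝ) 1)
    (Ω : Set (Euc d)) (hΩo : IsOpen Ω) (hΩb : Bornology.IsBounded Ω)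
    (α : ℝ) (hα : 0 < α)
    (f : Euc d → ℝ) (hf : MemLp f ⊤ (volume.restrict Ω))
    (hinf : essInf f (volume.restrict Ω) ≤ 0) (hsup : 0 ≤ essSup f (volume.restrict Ω))
    (u : Euc d → ℝ) (hu : u ∈ admSet2 d s Ω)
    (humin : IsMinOn (fun w => (∫ x in Ω, (w x - f x) ^ 2) + α * (fracSq d s w).toReal)
      (admSet2 d s Ω) u)
    (huniq : ∀ v ∈ admSet2 d s Ω,
      IsMinOn (fun w => (∫ x in Ω, (w x - f x) ^ 2) + α * (fracSq d s w).toReal)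
        (admSet2 d s Ω) v → v =ᵐ[volume] u) :
    ∀ᵐ x ∂(volume.restrict Ω),
      essInf f (volume.restrict Ω) ≤ u x ∧ u x ≤ essSup f (volume.restrict Ω) := by
  set μΩ := volume.restrict Ω with hμΩ
  set m := essInf f μΩ with hm
  set M := essSup f μΩ with hM
  have hmM : m ≤ M := hinf.trans hsup
  -- the truncated function
  set v : Euc d → ℝ := fun x => max m (min M (u x)) with hv
  -- boundedness of f
  have hfb : IsBoundedUnder (· ≤ ·) (ae μΩ) fun x => (‖f x‖₊ : ℝ≥0) := by
    have := hf.2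
    rw [eLpNorm_exponent_top] at this
    exact eLpNormEssSup_lt_top_iff_isBoundedUnder.mp this
  obtain ⟨C, hC⟩ := hfb
  have hC' : ∀ᵐ x ∂μΩ, |f x| ≤ (C : ℝ) := by
    filter_upwards [hC] with x hx
    simpa [← NNReal.coe_le_coe, Real.norm_eq_abs] using hx
  have hble : IsBoundedUnder (· ≤ ·) (ae μΩ) f :=
    ⟨(C : ℝ), eventually_map.2 (hC'.mono fun x hx => (le_abs_self _).trans hx)⟩
  have hbge : IsBoundedUnder (· ≥ ·) (ae μΩ) f :=
    ⟨(-C : ℝ), eventually_map.2 (hC'.mono fun x hx => (abs_le.mp hx).1)⟩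
  have hfM : ∀ᵐ x ∂μΩ, f x ≤ M := ae_le_essSup hble
  have hmf : ∀ᵐ x ∂μΩ, m ≤ f x := ae_essInf_le hbge
  -- measurability of v
  have hcont : Continuous fun t : ℝ => max m (min M t) :=
    continuous_const.max (continuous_const.min continuous_id)
  have hvm : AEStronglyMeasurable v volume :=
    hcont.comp_aestronglyMeasurable hu.2.aestronglyMeasurable
  -- |v| ≤ |u|
  have hvle : ∀ x, ‖v x‖ ≤ ‖u x‖ := by
    intro x
    have h0 : v x = max m (min M (u x)) := rfl
    have := clamp_sq_le m M (u x) 0 hinf hsup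
    simp only [sub_zero] at this
    rw [Real.norm_eq_abs, Real.norm_eq_abs, ← sq_abs (v x), ← sq_abs (u x)] at *
    nlinarith [abs_nonneg (v x), abs_nonneg (u x), sq_abs (v x), sq_abs (u x)]
  have hvL2 : MemLp v 2 volume := hu.2.of_le hvm (Eventually.of_forall hvle)
  -- v vanishes outside Ω
  have hv0 : ∀ x, x ∉ Ω → v x = 0 := by
    intro x hx
    simp [hv, hu.1.1 x hx, min_eq_right hsup, max_eq_right hinf]
  -- fracSq v ≤ fracSq u
  have hfs : fracSq d s v ≤ fracSq d s u := by
    refine lintegral_mono fun p => ENNReal.ofReal_le_ofReal ?_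
    have hden : (0:ℝ) ≤ dist p.1 p.2 ^ ((d : ℝ) + 2 * s) :=
      Real.rpow_nonneg dist_nonneg _
    have hnum : (v p.1 - v p.2) ^ 2 ≤ (u p.1 - u p.2) ^ 2 := by
      have h1 := clamp_lip m M (u p.1) (u p.2)
      calc (v p.1 - v p.2) ^ 2 = |v p.1 - v p.2| ^ 2 := (sq_abs _).symm
        _ ≤ |u p.1 - u p.2| ^ 2 := pow_le_pow_left₀ (abs_nonneg _) h1 2
        _ = (u p.1 - u p.2) ^ 2 := sq_abs _
    exact div_le_div_of_nonneg_right hnum hden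
  have hvadm : v ∈ admSet2 d s Ω := ⟨⟨hv0, lt_of_le_of_lt hfs hu.1.2⟩, hvL2⟩
  -- finite measure on Ω
  have hμfin : IsFiniteMeasure μΩ := by
    constructor
    rw [hμΩ, Measure.restrict_apply_univ]
    exact hΩb.measure_lt_top
  -- integrability
  have hfL2 : MemLp f 2 μΩ := hf.mono_exponent le_top
  have huL2 : MemLp u 2 μΩ := hu.2.restrict Ω
  have hvL2Ω : MemLp v 2 μΩ := hvL2.restrict Ω
  have hiu : Integrable (fun x => (u x - f x) ^ 2) μΩ := (huL2.sub hfL2).integrable_sq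
  have hiv : Integrable (fun x => (v x - f x) ^ 2) μΩ := (hvL2Ω.sub hfL2).integrable_sq
  -- fidelity comparison
  have hptwise : ∀ᵐ x ∂μΩ, (v x - f x) ^ 2 ≤ (u x - f x) ^ 2 := by
    filter_upwards [hfM, hmf] with x h1 h2
    exact clamp_sq_le m M (u x) (f x) h2 h1
  have hfid : (∫ x in Ω, (v x - f x) ^ 2) ≤ ∫ x in Ω, (u x - f x) ^ 2 :=
    integral_mono_ae hiv hiu hptwise
  have hreg : α * (fracSq d s v).toReal ≤ α * (fracSq d s u).toReal :=
    mul_le_mul_of_nonneg_left (ENNReal.toReal_mono hu.1.2.ne hfs) hα.le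
  -- v is also a minimizer
  have hEv : (∫ x in Ω, (v x - f x) ^ 2) + α * (fracSq d s v).toReal
      ≤ (∫ x in Ω, (u x - f x) ^ 2) + α * (fracSq d s u).toReal := add_le_add hfid hreg
  have hvmin : IsMinOn (fun w => (∫ x in Ω, (w x - f x) ^ 2) + α * (fracSq d s w).toReal)
      (admSet2 d s Ω) v := by
    intro w hw
    exact le_trans hEv (humin hw)
  have hvu : v =ᵐ[volume] u := huniq v hvadm hvmin
  have hvuΩ : ∀ᵐ x ∂μΩ, v x = u x := ae_restrict_of_ae hvu
  filter_upwards [hvuΩ] with x hx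
  constructor
  · rw [← hx]; exact le_max_left _ _
  · rw [← hx]; exact max_le hmM (min_le_left _ _)
end
end
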